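/- Let N be a positive integer and let A, B ⊆ [N]^3 be disjoint sets with A ∪ B = [N]^3. Then at least one of the six 2-dimensional axis-parallel projections π_XY(A), π_YZ(A), π_XZ(A), π_XY(B), π_YZ(B), π_XZ(B) has cardinality at least (3/4)·N². -/
import Mathlib

open Finset

set_option maxHeartbeats 1000000

lemma proj_compl {N : ℕ} (A B : Finset (Fin N × Fin N × Fin N))
    (hA : ∀ p, p ∉ B → p ∈ A) (hAB : ∀ p, p ∈ A → p ∉ B)
    (f : Fin N × Fin N × Fin N → Fin N × Fin N)
    (g : Fin N × Fin N → Fin N → Fin N × Fin N × Fin N)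
    (hfg : ∀ q z, f (g q z) = q) (hgf : ∀ p, ∃ z, g (f p) z = p) :
    A.image f = univ \ univ.filter (fun q => ∀ z, g q z ∈ B) := by
  ext q
  simp only [mem_image, mem_sdiff, mem_univ, true_and, mem_filter, not_and, not_forall]
  constructor
  · rintro ⟨p, hp, rfl⟩
    obtain ⟨z, hz⟩ := hgf p
    refine ⟨z, ?_⟩
    rw [hz]
    exact hAB p hp
  · rintro ⟨z, hz⟩
    exact ⟨g q z, hA _ hz, hfg q z⟩

lemma proj_card {N : ℕ} (A B : Finset (Fin N × Fin N × Fin N))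
    (hA : ∀ p, p ∉ B → p ∈ A) (hAB : ∀ p, p ∈ A → p ∉ B)
    (f : Fin N × Fin N × Fin N → Fin N × Fin N)
    (g : Fin N × Fin N → Fin N → Fin N × Fin N × Fin N)
    (hfg : ∀ q z, f (g q z) = q) (hgf : ∀ p, ∃ z, g (f p) z = p) :
    (A.image f).card = N ^ 2 - (univ.filter (fun q => ∀ z, g q z ∈ B)).card := by
  rw [proj_compl A B hA hAB f g hfg hgf, card_sdiff_of_subset (subset_univ _)]
  congr 1
  simp [sq]

lemma final_arith (M a1 a2 a3 a4 a5 a6 x1 y1 x2 y2 y3 z3 y4 z4 x5 z5 x6 z6 : ℝ)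
    (hM : 0 ≤ M)
    (nx1 : 0 ≤ x1) (ny1 : 0 ≤ y1) (nx2 : 0 ≤ x2) (ny2 : 0 ≤ y2)
    (ny3 : 0 ≤ y3) (nz3 : 0 ≤ z3) (ny4 : 0 ≤ y4) (nz4 : 0 ≤ z4)
    (nx5 : 0 ≤ x5) (nz5 : 0 ≤ z5) (nx6 : 0 ≤ x6) (nz6 : 0 ≤ z6)
    (h1 : a1 ≤ x1 * y1) (h2 : a2 ≤ x2 * y2) (h3 : a3 ≤ y3 * z3)
    (h4 : a4 ≤ y4 * z4) (h5 : a5 ≤ x5 * z5) (h6 : a6 ≤ x6 * z6)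
    (p1 : x1 * x6 ≤ M) (p2 : x2 * x5 ≤ M) (p3 : y1 * y4 ≤ M)
    (p4 : y2 * y3 ≤ M) (p5 : z3 * z6 ≤ M) (p6 : z4 * z5 ≤ M)
    (g1 : M < a1) (g2 : M < a2) (g3 : M < a3) (g4 : M < a4) (g5 : M < a5) (g6 : M < a6) :
    False := by
  have na2 : 0 ≤ a2 := le_trans hM g2.le
  have na3 : 0 ≤ a3 := le_trans hM g3.le
  have na4 : 0 ≤ a4 := le_trans hM g4.le
  have na5 : 0 ≤ a5 := le_trans hM g5.le
  have na6 : 0 ≤ a6 := le_trans hM g6.le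
  have u12 : a1 * a2 ≤ (x1 * y1) * (x2 * y2) :=
    mul_le_mul h1 h2 na2 (mul_nonneg nx1 ny1)
  have u13 : a1 * a2 * a3 ≤ (x1 * y1) * (x2 * y2) * (y3 * z3) :=
    mul_le_mul u12 h3 na3 (by positivity)
  have u14 : a1 * a2 * a3 * a4 ≤ (x1 * y1) * (x2 * y2) * (y3 * z3) * (y4 * z4) :=
    mul_le_mul u13 h4 na4 (by positivity)
  have u15 : a1 * a2 * a3 * a4 * a5 ≤ (x1 * y1) * (x2 * y2) * (y3 * z3) * (y4 * z4) * (x5 * z5) :=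
    mul_le_mul u14 h5 na5 (by positivity)
  have u16 : a1 * a2 * a3 * a4 * a5 * a6 ≤
      (x1 * y1) * (x2 * y2) * (y3 * z3) * (y4 * z4) * (x5 * z5) * (x6 * z6) :=
    mul_le_mul u15 h6 na6 (by positivity)
  have hre : (x1 * y1) * (x2 * y2) * (y3 * z3) * (y4 * z4) * (x5 * z5) * (x6 * z6)
      = (x1 * x6) * (x2 * x5) * (y1 * y4) * (y2 * y3) * (z3 * z6) * (z4 * z5) := by ring
  have q12 : (x1 * x6) * (x2 * x5) ≤ M * M :=
    mul_le_mul p1 p2 (mul_nonneg nx2 nx5) hM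
  have q13 : (x1 * x6) * (x2 * x5) * (y1 * y4) ≤ M * M * M :=
    mul_le_mul q12 p3 (mul_nonneg ny1 ny4) (by positivity)
  have q14 : (x1 * x6) * (x2 * x5) * (y1 * y4) * (y2 * y3) ≤ M * M * M * M :=
    mul_le_mul q13 p4 (mul_nonneg ny2 ny3) (by positivity)
  have q15 : (x1 * x6) * (x2 * x5) * (y1 * y4) * (y2 * y3) * (z3 * z6) ≤ M * M * M * M * M :=
    mul_le_mul q14 p5 (mul_nonneg nz3 nz6) (by positivity)
  have q16 : (x1 * x6) * (x2 * x5) * (y1 * y4) * (y2 * y3) * (z3 * z6) * (z4 * z5)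
      ≤ M * M * M * M * M * M :=
    mul_le_mul q15 p6 (mul_nonneg nz4 nz5) (by positivity)
  have l12 : M * M < a1 * a2 := mul_lt_mul'' g1 g2 hM hM
  have l13 : M * M * M < a1 * a2 * a3 := mul_lt_mul'' l12 g3 (by positivity) hM
  have l14 : M * M * M * M < a1 * a2 * a3 * a4 := mul_lt_mul'' l13 g4 (by positivity) hM
  have l15 : M * M * M * M * M < a1 * a2 * a3 * a4 * a5 := mul_lt_mul'' l14 g5 (by positivity) hM
  have l16 : M * M * M * M * M * M < a1 * a2 * a3 * a4 * a5 * a6 :=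
    mul_lt_mul'' l15 g6 (by positivity) hM
  rw [hre] at u16
  linarith

/-- If `A, B` partition `[N]³`, then one of the six 2-dimensional axis-parallel
projections of `A` and `B` has size at least `(3/4) N²`. -/
theorem partition_projection_three_quarters (N : ℕ) (hN : 0 < N)
    (A B : Finset (Fin N × Fin N × Fin N))
    (hdisj : Disjoint A B) (hcover : A ∪ B = Finset.univ) :
    (3/4 : ℝ) * N ^ 2 ≤ ((A.image (fun p => (p.1, p.2.1))).card : ℝ) ∨
    (3/4 : ℝ) * N ^ 2 ≤ ((A.image (fun p => (p.2.1, p.2.2))).card : ℝ) ∨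
    (3/4 : ℝ) * N ^ 2 ≤ ((A.image (fun p => (p.1, p.2.2))).card : ℝ) ∨
    (3/4 : ℝ) * N ^ 2 ≤ ((B.image (fun p => (p.1, p.2.1))).card : ℝ) ∨
    (3/4 : ℝ) * N ^ 2 ≤ ((B.image (fun p => (p.2.1, p.2.2))).card : ℝ) ∨
    (3/4 : ℝ) * N ^ 2 ≤ ((B.image (fun p => (p.1, p.2.2))).card : ℝ) := by
  by_contra hcon
  push_neg at hcon
  obtain ⟨G1, G2, G3, G4, G5, G6⟩ := hcon
  -- partition facts
  have hAB : ∀ p, p ∈ A → p ∉ B := fun p h => disjoint_left.mp hdisj h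
  have hBA : ∀ p, p ∈ B → p ∉ A := fun p h => disjoint_right.mp hdisj h
  have hA : ∀ p, p ∉ B → p ∈ A := by
    intro p hp
    have : p ∈ A ∪ B := hcover ▸ mem_univ p
    rcases mem_union.mp this with h | h
    · exact h
    · exact absurd h hp
  have hB : ∀ p, p ∉ A → p ∈ B := by
    intro p hp
    have : p ∈ A ∪ B := hcover ▸ mem_univ p
    rcases mem_union.mp this with h | h
    · exact absurd h hp
    · exact h
  -- the six pure-line sets
  set ZA : Finset (Fin N × Fin N) := univ.filter (fun q => ∀ z, (q.1, q.2, z) ∈ A) with hZA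
  set ZB : Finset (Fin N × Fin N) := univ.filter (fun q => ∀ z, (q.1, q.2, z) ∈ B) with hZB
  set XA : Finset (Fin N × Fin N) := univ.filter (fun q => ∀ x, (x, q.1, q.2) ∈ A) with hXA
  set XB : Finset (Fin N × Fin N) := univ.filter (fun q => ∀ x, (x, q.1, q.2) ∈ B) with hXB
  set YA : Finset (Fin N × Fin N) := univ.filter (fun q => ∀ y, (q.1, y, q.2) ∈ A) with hYA
  set YB : Finset (Fin N × Fin N) := univ.filter (fun q => ∀ y, (q.1, y, q.2) ∈ B) with hYB
  -- projection cardinalities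
  have cZB : (A.image (fun p => (p.1, p.2.1))).card = N ^ 2 - ZB.card :=
    proj_card A B hA hAB _ (fun q z => (q.1, q.2, z)) (fun q z => rfl) (fun p => ⟨p.2.2, rfl⟩)
  have cXB : (A.image (fun p => (p.2.1, p.2.2))).card = N ^ 2 - XB.card :=
    proj_card A B hA hAB _ (fun q x => (x, q.1, q.2)) (fun q x => rfl) (fun p => ⟨p.1, rfl⟩)
  have cYB : (A.image (fun p => (p.1, p.2.2))).card = N ^ 2 - YB.card :=
    proj_card A B hA hAB _ (fun q y => (q.1, y, q.2)) (fun q y => rfl) (fun p => ⟨p.2.1, rfl⟩)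
  have cZA : (B.image (fun p => (p.1, p.2.1))).card = N ^ 2 - ZA.card :=
    proj_card B A hB hBA _ (fun q z => (q.1, q.2, z)) (fun q z => rfl) (fun p => ⟨p.2.2, rfl⟩)
  have cXA : (B.image (fun p => (p.2.1, p.2.2))).card = N ^ 2 - XA.card :=
    proj_card B A hB hBA _ (fun q x => (x, q.1, q.2)) (fun q x => rfl) (fun p => ⟨p.1, rfl⟩)
  have cYA : (B.image (fun p => (p.1, p.2.2))).card = N ^ 2 - YA.card :=
    proj_card B A hB hBA _ (fun q y => (q.1, y, q.2)) (fun q y => rfl) (fun p => ⟨p.2.1, rfl⟩)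
  -- card bounds
  have hcard2 : (univ : Finset (Fin N × Fin N)).card = N ^ 2 := by simp [sq]
  have leZA : ZA.card ≤ N ^ 2 := hcard2 ▸ card_le_card (subset_univ _)
  have leZB : ZB.card ≤ N ^ 2 := hcard2 ▸ card_le_card (subset_univ _)
  have leXA : XA.card ≤ N ^ 2 := hcard2 ▸ card_le_card (subset_univ _)
  have leXB : XB.card ≤ N ^ 2 := hcard2 ▸ card_le_card (subset_univ _)
  have leYA : YA.card ≤ N ^ 2 := hcard2 ▸ card_le_card (subset_univ _)
  have leYB : YB.card ≤ N ^ 2 := hcard2 ▸ card_le_card (subset_univ _)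
  -- convert to real lower bounds on pure counts
  have M4 : ∀ c : ℕ, c ≤ N ^ 2 → ((N ^ 2 - c : ℕ) : ℝ) < 3/4 * N ^ 2 → (N : ℝ) ^ 2 / 4 < c := by
    intro c hc h
    rw [Nat.cast_sub hc] at h
    push_cast at h ⊢
    linarith
  rw [cZB] at G1; rw [cXB] at G2; rw [cYB] at G3
  rw [cZA] at G4; rw [cXA] at G5; rw [cYA] at G6
  have gZB := M4 _ leZB G1
  have gXB := M4 _ leXB G2
  have gYB := M4 _ leYB G3
  have gZA := M4 _ leZA G4
  have gXA := M4 _ leXA G5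
  have gYA := M4 _ leYA G6
  -- coordinate images
  have prodb : ∀ S : Finset (Fin N × Fin N),
      S.card ≤ (S.image Prod.fst).card * (S.image Prod.snd).card := by
    intro S
    calc S.card ≤ (S.image Prod.fst ×ˢ S.image Prod.snd).card :=
          card_le_card Finset.subset_product
      _ = _ := card_product _ _
  -- disjointness of coordinate images, giving pair sum bounds
  have pairbound : ∀ S T : Finset (Fin N), Disjoint S T → S.card + T.card ≤ N := by
    intro S T hd
    calc S.card + T.card = (S ∪ T).card := (card_union_of_disjoint hd).symm
      _ ≤ (univ : Finset (Fin N)).card := card_le_card (subset_univ _)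
      _ = N := by simp
  have dx1 : Disjoint (ZA.image Prod.fst) (YB.image Prod.fst) := by
    rw [disjoint_left]
    rintro x hx hx'
    simp only [hZA, hYB, mem_image, mem_filter, mem_univ, true_and] at hx hx'
    obtain ⟨⟨x0, y0⟩, hq, rfl⟩ := hx
    obtain ⟨⟨x1, z1⟩, hq', he⟩ := hx'
    cases he
    exact hAB _ (hq z1) (hq' y0)
  have dx2 : Disjoint (ZB.image Prod.fst) (YA.image Prod.fst) := by
    rw [disjoint_left]
    rintro x hx hx'
    simp only [hZB, hYA, mem_image, mem_filter, mem_univ, true_and] at hx hx'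
    obtain ⟨⟨x0, y0⟩, hq, rfl⟩ := hx
    obtain ⟨⟨x1, z1⟩, hq', he⟩ := hx'
    cases he
    exact hAB _ (hq' y0) (hq z1)
  have dy1 : Disjoint (ZA.image Prod.snd) (XB.image Prod.fst) := by
    rw [disjoint_left]
    rintro y hy hy'
    simp only [hZA, hXB, mem_image, mem_filter, mem_univ, true_and] at hy hy'
    obtain ⟨⟨x0, y0⟩, hq, rfl⟩ := hy
    obtain ⟨⟨y1, z1⟩, hq', he⟩ := hy'
    cases he
    exact hAB _ (hq z1) (hq' x0)
  have dy2 : Disjoint (ZB.image Prod.snd) (XA.image Prod.fst) := by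
    rw [disjoint_left]
    rintro y hy hy'
    simp only [hZB, hXA, mem_image, mem_filter, mem_univ, true_and] at hy hy'
    obtain ⟨⟨x0, y0⟩, hq, rfl⟩ := hy
    obtain ⟨⟨y1, z1⟩, hq', he⟩ := hy'
    cases he
    exact hAB _ (hq' x0) (hq z1)
  have dz1 : Disjoint (XA.image Prod.snd) (YB.image Prod.snd) := by
    rw [disjoint_left]
    rintro z hz hz'
    simp only [hXA, hYB, mem_image, mem_filter, mem_univ, true_and] at hz hz'
    obtain ⟨⟨y0, z0⟩, hq, rfl⟩ := hz
    obtain ⟨⟨x1, z1⟩, hq', he⟩ := hz'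
    cases he
    exact hAB _ (hq x1) (hq' y0)
  have dz2 : Disjoint (XB.image Prod.snd) (YA.image Prod.snd) := by
    rw [disjoint_left]
    rintro z hz hz'
    simp only [hXB, hYA, mem_image, mem_filter, mem_univ, true_and] at hz hz'
    obtain ⟨⟨y0, z0⟩, hq, rfl⟩ := hz
    obtain ⟨⟨x1, z1⟩, hq', he⟩ := hz'
    cases he
    exact hAB _ (hq' y0) (hq x1)
  -- pair products bounded by N^2/4
  have pairmul : ∀ S T : Finset (Fin N), Disjoint S T →
      (S.card : ℝ) * T.card ≤ (N : ℝ) ^ 2 / 4 := by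
    intro S T hd
    have h := pairbound S T hd
    have h' : (S.card : ℝ) + T.card ≤ N := by exact_mod_cast h
    nlinarith [sq_nonneg ((S.card : ℝ) - T.card)]
  exact final_arith ((N : ℝ) ^ 2 / 4)
    ZA.card ZB.card XA.card XB.card YA.card YB.card
    ((ZA.image Prod.fst).card) ((ZA.image Prod.snd).card)
    ((ZB.image Prod.fst).card) ((ZB.image Prod.snd).card)
    ((XA.image Prod.fst).card) ((XA.image Prod.snd).card)
    ((XB.image Prod.fst).card) ((XB.image Prod.snd).card)
    ((YA.image Prod.fst).card) ((YA.image Prod.snd).card)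
    ((YB.image Prod.fst).card) ((YB.image Prod.snd).card)
    (by positivity)
    (Nat.cast_nonneg _) (Nat.cast_nonneg _) (Nat.cast_nonneg _) (Nat.cast_nonneg _)
    (Nat.cast_nonneg _) (Nat.cast_nonneg _) (Nat.cast_nonneg _) (Nat.cast_nonneg _)
    (Nat.cast_nonneg _) (Nat.cast_nonneg _) (Nat.cast_nonneg _) (Nat.cast_nonneg _)
    (by exact_mod_cast prodb ZA) (by exact_mod_cast prodb ZB)
    (by exact_mod_cast prodb XA) (by exact_mod_cast prodb XB)
    (by exact_mod_cast prodb YA) (by exact_mod_cast prodb YB)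
    (pairmul _ _ dx1) (pairmul _ _ dx2) (pairmul _ _ dy1)
    (pairmul _ _ dy2) (pairmul _ _ dz1) (pairmul _ _ dz2)
    gZA gZB gXA gXB gYA gYB
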